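/- arXiv:2407.13569 — 3 statements merged into one kernel-verified Lean document; each statement's English description precedes it below -/
import Mathlib

section
/- For 0 < a < 1, t ∈ [0,1), ε > 0, and z in the unit disc with |z - 1| < ε, the real part of (1-(1-t)z)^{a-1} is at least t^{1-a}/(t+ε)^{2(1-a)}. -/
open Real Complex

private lemma cos_rpow_le_aux (θ b : ℝ) (hθ : θ ∈ Set.Icc (-(π/2)) (π/2))
    (hb0 : 0 ≤ b) (hb1 : b ≤ 1) :
    Real.cos θ ^ b ≤ Real.cos (b * θ) := by
  have hcos : 0 ≤ Real.cos θ := Real.cos_nonneg_of_mem_Icc hθ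
  have h1 : Real.cos θ ^ b * (1:ℝ) ^ (1-b) ≤ b * Real.cos θ + (1-b) * 1 :=
    Real.geom_mean_le_arith_mean2_weighted hb0 (by linarith) hcos zero_le_one (by ring)
  have h0mem : (0:ℝ) ∈ Set.Icc (-(π/2)) (π/2) := by
    constructor <;> [linarith [Real.pi_pos]; linarith [Real.pi_pos]]
  have h2 := (strictConcaveOn_cos_Icc.concaveOn).2 hθ h0mem hb0
    (show (0:ℝ) ≤ 1 - b by linarith) (show b + (1 - b) = 1 by ring)
  simp only [smul_eq_mul, mul_zero, add_zero, Real.cos_zero, mul_one] at h2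
  calc Real.cos θ ^ b = Real.cos θ ^ b * (1:ℝ) ^ (1-b) := by rw [Real.one_rpow, mul_one]
    _ ≤ b * Real.cos θ + (1-b) * 1 := h1
    _ ≤ Real.cos (b * θ) := by linarith

/-- For `0 < a < 1`, `t ∈ [0,1)`, `ε > 0` and `z ∈ 𝔻` with `|z-1| < ε`,
`Re((1-(1-t)z)^{a-1}) ≥ t^{1-a}/(t+ε)^{2(1-a)}` (principal branch). -/
theorem stmt15 (a t ε : ℝ) (ha0 : 0 < a) (ha1 : a < 1) (ht : t ∈ Set.Ico (0 : ℝ) 1)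
    (hε : 0 < ε) (z : ℂ) (hz : z ∈ Metric.ball (0 : ℂ) 1) (hze : ‖z - 1‖ < ε) :
    t ^ (1 - a) / (t + ε) ^ (2 * (1 - a)) ≤
      ((1 - (1 - (t : ℂ)) * z) ^ ((a : ℂ) - 1)).re := by
  obtain ⟨ht0, ht1⟩ := ht
  set w : ℂ := 1 - (1 - (t : ℂ)) * z with hw
  have hzabs : ‖z‖ < 1 := by simpa [Complex.dist_eq] using hz
  have hzre : z.re < 1 := lt_of_le_of_lt (le_trans (le_abs_self _)
    (Complex.abs_re_le_norm z)) hzabs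
  have hwre_eq : w.re = 1 - (1 - t) * z.re := by simp [hw]
  have hwre_gt : t < w.re := by
    rw [hwre_eq]
    nlinarith [hzre]
  have hwre_pos : 0 < w.re := lt_of_le_of_lt ht0 hwre_gt
  have hw0 : w ≠ 0 := fun h => by simp [h] at hwre_pos
  set r : ℝ := ‖w‖ with hr
  have hr_pos : 0 < r := norm_pos_iff.mpr hw0
  have hr_le : r ≤ t + ε := by
    have h1z : ‖1 - z‖ < ε := by
      simpa [norm_sub_rev] using hze
    have hwdec : w = (t : ℂ) + (1 - (t:ℂ)) * (1 - z) := by ring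
    have h1t : ‖1 - (t:ℂ)‖ = 1 - t := by
      rw [show (1 - (t:ℂ)) = ((1 - t : ℝ) : ℂ) by push_cast; ring]
      rw [Complex.norm_real, Real.norm_eq_abs, _root_.abs_of_nonneg (by linarith : (0:ℝ) ≤ 1 - t)]
    calc r ≤ ‖(t:ℂ)‖ + ‖(1 - (t:ℂ)) * (1 - z)‖ := by
            rw [hr, hwdec]; exact norm_add_le _ _
      _ = t + (1 - t) * ‖1 - z‖ := by
            rw [Complex.norm_real, Real.norm_eq_abs, _root_.abs_of_nonneg ht0, norm_mul, h1t]
      _ ≤ t + ε := by nlinarith [norm_nonneg (1 - z)]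
  set θ : ℝ := Complex.arg w with hθ
  have hθmem : θ ∈ Set.Icc (-(π/2)) (π/2) := by
    exact Set.mem_Icc.mpr (abs_le.mp (Complex.abs_arg_le_pi_div_two_iff.mpr hwre_pos.le))
  -- compute the real part of w ^ (a - 1)
  have hre : (w ^ ((a : ℂ) - 1)).re = r ^ (a - 1) * Real.cos ((a - 1) * θ) := by
    rw [Complex.cpow_def_of_ne_zero hw0, Complex.exp_re]
    have hlog : (Complex.log w * ((a : ℂ) - 1)).re = Real.log r * (a - 1) := by
      simp [Complex.log_re, Complex.mul_re, Complex.mul_im, hr]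
    have hlogim : (Complex.log w * ((a : ℂ) - 1)).im = (a - 1) * θ := by
      simp [Complex.log_im, Complex.mul_im, Complex.mul_re, hθ]
      ring
    rw [hlog, hlogim, Real.rpow_def_of_pos hr_pos]
  have hcosθ : Real.cos θ = w.re / r := Complex.cos_arg hw0
  have hkey : Real.cos θ ^ (1 - a) ≤ Real.cos ((a - 1) * θ) := by
    have := cos_rpow_le_aux θ (1 - a) hθmem (by linarith) (by linarith)
    rwa [show (a - 1) * θ = -((1 - a) * θ) by ring, Real.cos_neg]
  have hstep : r ^ (a - 1) * (Real.cos θ ^ (1 - a)) ≤ (w ^ ((a : ℂ) - 1)).re := by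
    rw [hre]
    exact mul_le_mul_of_nonneg_left hkey (Real.rpow_nonneg hr_pos.le _)
  refine le_trans ?_ hstep
  have hcosval : Real.cos θ ^ (1 - a) = w.re ^ (1 - a) / r ^ (1 - a) := by
    rw [hcosθ, Real.div_rpow hwre_pos.le hr_pos.le]
  rw [hcosval]
  have hcombine : r ^ (a - 1) * (w.re ^ (1 - a) / r ^ (1 - a)) =
      w.re ^ (1 - a) * r ^ (2 * a - 2) := by
    rw [mul_div_assoc', mul_comm, mul_div_assoc, ← Real.rpow_sub hr_pos]
    ring_nf
  rw [hcombine]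
  have hrhs : t ^ (1 - a) / (t + ε) ^ (2 * (1 - a)) =
      t ^ (1 - a) * (t + ε) ^ (2 * a - 2) := by
    rw [div_eq_mul_inv, ← Real.rpow_neg (by linarith)]
    ring_nf
  rw [hrhs]
  have h1 : t ^ (1 - a) ≤ w.re ^ (1 - a) :=
    Real.rpow_le_rpow ht0 hwre_gt.le (by linarith)
  have h2 : (t + ε) ^ (2 * a - 2) ≤ r ^ (2 * a - 2) :=
    Real.rpow_le_rpow_of_nonpos hr_pos hr_le (by linarith)
  exact mul_le_mul h1 h2 (Real.rpow_nonneg (by linarith) _) (Real.rpow_nonneg hwre_pos.le _)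
end

section
/- For a > 1, t ∈ [0,1), and z in the unit disc, the real part of (1-(1-t)z)^{a-1} is at least t^{a-1}. -/
/-- For `1 < a ≤ 2`, `t ∈ [0,1)` and `z ∈ 𝔻`,
`Re((1-(1-t)z)^{a-1}) ≥ t^{a-1}` (principal branch). -/
theorem stmt16 (a t : ℝ) (ha1 : 1 < a) (ha2 : a ≤ 2) (ht : t ∈ Set.Ico (0 : ℝ) 1)
    (z : ℂ) (hz : z ∈ Metric.ball (0 : ℂ) 1) :
    t ^ (a - 1) ≤ ((1 - (1 - (t : ℂ)) * z) ^ ((a : ℂ) - 1)).re := by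
  obtain ⟨ht0, ht1⟩ := ht
  have hzabs : ‖z‖ < 1 := by
    simpa [Complex.dist_eq] using hz
  set σ : ℝ := a - 1 with hσ
  have hσ0 : 0 < σ := by simp [hσ]; linarith
  have hσ1 : σ ≤ 1 := by simp [hσ]; linarith
  set w : ℂ := 1 - (1 - (t : ℂ)) * z with hw
  -- real part of w exceeds t
  have hwre : w.re = 1 - (1 - t) * z.re := by
    simp [hw, Complex.sub_re, Complex.mul_re]
  have hret : t < w.re := by
    have h1 : z.re ≤ ‖z‖ := Complex.re_le_norm z
    have h2 : (1 - t) * z.re ≤ (1 - t) * ‖z‖ := by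
      apply mul_le_mul_of_nonneg_left h1; linarith
    have h3 : (1 - t) * ‖z‖ < 1 - t := by
      nlinarith
    rw [hwre]; linarith
  have hwre0 : 0 < w.re := lt_of_le_of_lt ht0 hret
  have hwne : w ≠ 0 := by
    intro h; rw [h] at hwre0; simp at hwre0
  have habs0 : 0 < ‖w‖ := norm_pos_iff.mpr hwne
  set θ : ℝ := Complex.arg w with hθ
  have hargle : |θ| < Real.pi / 2 :=
    Complex.abs_arg_lt_pi_div_two_iff.mpr (Or.inl hwre0)
  have hθmem : θ ∈ Set.Icc (-(Real.pi / 2)) (Real.pi / 2) := by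
    constructor <;> [linarith [neg_abs_le θ]; linarith [le_abs_self θ]]
  have h0mem : (0 : ℝ) ∈ Set.Icc (-(Real.pi / 2)) (Real.pi / 2) := by
    constructor <;> [linarith [Real.pi_pos]; linarith [Real.pi_pos]]
  have hcosθ0 : 0 ≤ Real.cos θ := by
    apply Real.cos_nonneg_of_mem_Icc
    exact ⟨hθmem.1, hθmem.2⟩
  -- concavity: cos (σθ) ≥ σ cos θ + (1-σ)
  have hconc : σ * Real.cos θ + (1 - σ) * Real.cos 0 ≤ Real.cos (σ • θ + (1 - σ) • (0:ℝ)) := by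
    exact strictConcaveOn_cos_Icc.concaveOn.2 hθmem h0mem (le_of_lt hσ0) (by linarith) (by ring)
  have hconc' : σ * Real.cos θ + (1 - σ) ≤ Real.cos (σ * θ) := by
    simpa using hconc
  -- AM-GM: (cos θ)^σ ≤ σ cos θ + (1-σ)
  have hamgm : Real.cos θ ^ σ ≤ σ * Real.cos θ + (1 - σ) := by
    have := Real.geom_mean_le_arith_mean2_weighted (le_of_lt hσ0) (by linarith : (0:ℝ) ≤ 1 - σ)
      hcosθ0 (zero_le_one) (by ring)
    simpa using this
  have hkey : Real.cos θ ^ σ ≤ Real.cos (σ * θ) := le_trans hamgm hconc'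
  -- compute Re (w ^ σ)
  have hre_cpow : (w ^ ((a : ℂ) - 1)).re = ‖w‖ ^ σ * Real.cos (σ * θ) := by
    rw [Complex.cpow_def_of_ne_zero hwne]
    have hca : ((a : ℂ) - 1) = (σ : ℂ) := by push_cast [hσ]; ring
    rw [hca, Complex.exp_re]
    have hlogre : (Complex.log w * (σ : ℂ)).re = Real.log (‖w‖) * σ := by
      simp [Complex.log_re]
    have hlogim : (Complex.log w * (σ : ℂ)).im = θ * σ := by
      simp [Complex.log_im, hθ]
    rw [hlogre, hlogim, Real.rpow_def_of_pos habs0, mul_comm θ σ]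
  rw [hre_cpow]
  -- chain of inequalities
  have hwrecos : w.re = ‖w‖ * Real.cos θ := by
    rw [Complex.cos_arg hwne]
    field_simp
  calc t ^ σ ≤ w.re ^ σ := Real.rpow_le_rpow ht0 (le_of_lt hret) (le_of_lt hσ0)
    _ = (‖w‖ * Real.cos θ) ^ σ := by rw [hwrecos]
    _ = ‖w‖ ^ σ * Real.cos θ ^ σ := Real.mul_rpow (le_of_lt habs0) hcosθ0
    _ ≤ ‖w‖ ^ σ * Real.cos (σ * θ) := by
        apply mul_le_mul_of_nonneg_left hkey
        positivity
end

section
/- There exists a Borel probability measure μ on [0,1), absolutely continuous with respect to Lebesgue measure and supported on [0,1/2], such that ∫_0^1 √(log(e/t)) dμ(t) = ∞ while ∫_0^1 μ[0,t) log(e/t) dμ(t) < ∞ and ∫_0^1 (1-t)^{-1} dμ(t) < ∞. -/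
open MeasureTheory Set Filter Real
open scoped Topology ENNReal

noncomputable def Lf (t : ℝ) : ℝ := 1 - Real.log t

noncomputable def c0 : ℝ := Real.sqrt (1 + Real.log 2) * Real.log (1 + Real.log 2)

noncomputable def Ff (t : ℝ) : ℝ := c0 / (Real.sqrt (Lf t) * Real.log (Lf t))

noncomputable def ff (t : ℝ) : ℝ :=
  c0 * (Real.log (Lf t) + 2) / (2 * t * Real.sqrt (Lf t) * Lf t * (Real.log (Lf t)) ^ 2)

lemma log2_pos : 0 < Real.log 2 := Real.log_pos one_lt_two

lemma c0_pos : 0 < c0 := by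
  apply mul_pos (Real.sqrt_pos.2 (by positivity)) (Real.log_pos (by linarith [log2_pos]))

lemma Lf_gt_one {t : ℝ} (ht0 : 0 < t) (ht1 : t < 1) : 1 < Lf t := by
  have := Real.log_neg ht0 ht1
  simp only [Lf]; linarith

lemma Lf_half : Lf (1/2) = 1 + Real.log 2 := by
  simp only [Lf, one_div, Real.log_inv]; ring

lemma Lf_mono {t : ℝ} (ht0 : 0 < t) (ht : t ≤ 1/2) : 1 + Real.log 2 ≤ Lf t := by
  rw [← Lf_half]
  simp only [Lf]
  have := Real.log_le_log ht0 ht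
  linarith

lemma LL_pos {t : ℝ} (ht0 : 0 < t) (ht1 : t < 1) : 0 < Real.log (Lf t) :=
  Real.log_pos (Lf_gt_one ht0 ht1)

lemma hasDerivAt_Lf {t : ℝ} (ht0 : 0 < t) : HasDerivAt Lf (-t⁻¹) t := by
  exact ((Real.hasDerivAt_log ht0.ne').const_sub 1).congr_deriv (by simp)

lemma hasDerivAt_Ff {t : ℝ} (ht0 : 0 < t) (ht1 : t < 1) : HasDerivAt Ff (ff t) t := by
  have hL := Lf_gt_one ht0 ht1
  have hLpos : 0 < Lf t := by linarith
  have hLL := LL_pos ht0 ht1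
  have hs : 0 < Real.sqrt (Lf t) := Real.sqrt_pos.2 hLpos
  have hL' := hasDerivAt_Lf ht0
  have hsd : HasDerivAt (fun t => Real.sqrt (Lf t)) (-t⁻¹ / (2 * Real.sqrt (Lf t))) t := by
    simpa [div_eq_mul_inv, mul_comm, Function.comp_def] using (Real.hasDerivAt_sqrt hLpos.ne').comp t hL'
  have hld : HasDerivAt (fun t => Real.log (Lf t)) (-t⁻¹ / Lf t) t := by
    simpa [div_eq_mul_inv, mul_comm, Function.comp_def] using (Real.hasDerivAt_log hLpos.ne').comp t hL'
  have hden : HasDerivAt (fun t => Real.sqrt (Lf t) * Real.log (Lf t))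
      ((-t⁻¹ / (2 * Real.sqrt (Lf t))) * Real.log (Lf t)
        + Real.sqrt (Lf t) * (-t⁻¹ / Lf t)) t := hsd.mul hld
  have hne : Real.sqrt (Lf t) * Real.log (Lf t) ≠ 0 := by positivity
  have := (hasDerivAt_const t c0).div hden hne
  convert (id this : HasDerivAt Ff _ t) using 1
  simp only [ff]
  have hsq : Real.sqrt (Lf t) * Real.sqrt (Lf t) = Lf t := Real.mul_self_sqrt hLpos.le
  set S := Real.sqrt (Lf t) with hS
  set G := Real.log (Lf t) with hG
  rw [← hsq]
  have hS0 : S ≠ 0 := hs.ne'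
  have hG0 : G ≠ 0 := hLL.ne'
  field_simp
  ring

example : True := trivial

noncomputable def phi2 (t : ℝ) : ℝ := c0 / (2 * (t * Lf t * Real.log (Lf t)))

noncomputable def Phi2 (t : ℝ) : ℝ := -(c0 / 2) * Real.log (Real.log (Lf t))

noncomputable def K0 : ℝ := c0 ^ 2 * (1 / 2 + (Real.log (1 + Real.log 2))⁻¹)

noncomputable def phi3 (t : ℝ) : ℝ := K0 / (t * Lf t * (Real.log (Lf t)) ^ 2)

noncomputable def Phi3 (t : ℝ) : ℝ := K0 * (Real.log (Lf t))⁻¹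

lemma hasDerivAt_LL {t : ℝ} (ht0 : 0 < t) (ht1 : t < 1) :
    HasDerivAt (fun t => Real.log (Lf t)) (-t⁻¹ / Lf t) t := by
  have hLpos : 0 < Lf t := lt_trans one_pos (Lf_gt_one ht0 ht1)
  simpa [div_eq_mul_inv, mul_comm, Function.comp_def] using
    (Real.hasDerivAt_log hLpos.ne').comp t (hasDerivAt_Lf ht0)

lemma hasDerivAt_Phi2 {t : ℝ} (ht0 : 0 < t) (ht1 : t < 1) : HasDerivAt Phi2 (phi2 t) t := by
  have hLpos : 0 < Lf t := lt_trans one_pos (Lf_gt_one ht0 ht1)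
  have hLL := LL_pos ht0 ht1
  have h := ((Real.hasDerivAt_log hLL.ne').comp t (hasDerivAt_LL ht0 ht1)).const_mul (-(c0 / 2))
  convert (id h : HasDerivAt Phi2 _ t) using 1
  simp only [phi2]
  field_simp

lemma hasDerivAt_Phi3 {t : ℝ} (ht0 : 0 < t) (ht1 : t < 1) : HasDerivAt Phi3 (phi3 t) t := by
  have hLpos : 0 < Lf t := lt_trans one_pos (Lf_gt_one ht0 ht1)
  have hLL := LL_pos ht0 ht1
  have h := ((hasDerivAt_LL ht0 ht1).inv hLL.ne').const_mul K0
  convert (id h : HasDerivAt Phi3 _ t) using 1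
  simp only [phi3]
  field_simp

lemma contL {t : ℝ} (ht0 : 0 < t) : ContinuousAt Lf t :=
  continuousAt_const.sub (Real.continuousAt_log ht0.ne')

lemma contLL {t : ℝ} (ht0 : 0 < t) (ht1 : t < 1) :
    ContinuousAt (fun t => Real.log (Lf t)) t := by
  have hLpos : 0 < Lf t := lt_trans one_pos (Lf_gt_one ht0 ht1)
  exact (Real.continuousAt_log hLpos.ne').comp (contL ht0)

lemma cont_ff {t : ℝ} (ht0 : 0 < t) (ht1 : t < 1) : ContinuousAt ff t := by
  have hLpos : 0 < Lf t := lt_trans one_pos (Lf_gt_one ht0 ht1)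
  have hLL := LL_pos ht0 ht1
  have hs : 0 < Real.sqrt (Lf t) := Real.sqrt_pos.2 hLpos
  exact (continuousAt_const.mul ((contLL ht0 ht1).add continuousAt_const)).div
    ((((continuousAt_const.mul continuousAt_id).mul
      ((Real.continuous_sqrt.continuousAt).comp (contL ht0))).mul
      (contL ht0)).mul ((contLL ht0 ht1).pow 2)) (by positivity)

lemma cont_phi2 {t : ℝ} (ht0 : 0 < t) (ht1 : t < 1) : ContinuousAt phi2 t := by
  have hLpos : 0 < Lf t := lt_trans one_pos (Lf_gt_one ht0 ht1)
  have hLL := LL_pos ht0 ht1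
  exact continuousAt_const.div
    (continuousAt_const.mul ((continuousAt_id.mul (contL ht0)).mul (contLL ht0 ht1)))
    (by positivity)

lemma cont_phi3 {t : ℝ} (ht0 : 0 < t) (ht1 : t < 1) : ContinuousAt phi3 t := by
  have hLpos : 0 < Lf t := lt_trans one_pos (Lf_gt_one ht0 ht1)
  have hLL := LL_pos ht0 ht1
  exact continuousAt_const.div
    (((continuousAt_id.mul (contL ht0))).mul ((contLL ht0 ht1).pow 2)) (by positivity)

lemma meas_Lf : Measurable Lf := measurable_const.sub Real.measurable_log

lemma meas_ff : Measurable ff := by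
  unfold ff
  exact (measurable_const.mul ((meas_Lf.log).add measurable_const)).div
    ((((measurable_const.mul measurable_id).mul (meas_Lf.sqrt)).mul meas_Lf).mul
      ((meas_Lf.log).pow_const 2))

lemma ftc_Ioc {Φ φ : ℝ → ℝ} {a b : ℝ} (ha : 0 < a) (hab : a ≤ b) (hb : b < 1)
    (hd : ∀ t, 0 < t → t < 1 → HasDerivAt Φ (φ t) t)
    (hc : ∀ t, 0 < t → t < 1 → ContinuousAt φ t)
    (hpos : ∀ t, 0 < t → t < 1 → 0 ≤ φ t) :
    ∫⁻ t in Set.Ioc a b, ENNReal.ofReal (φ t) = ENNReal.ofReal (Φ b - Φ a) := by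
  have hsub : Set.uIcc a b ⊆ Set.Ioo 0 1 := by
    rw [Set.uIcc_of_le hab]
    exact fun t ht => ⟨lt_of_lt_of_le ha ht.1, lt_of_le_of_lt ht.2 hb⟩
  have hcont : ContinuousOn φ (Set.uIcc a b) := fun t ht =>
    ((hc t (hsub ht).1 (hsub ht).2).continuousWithinAt)
  have hii : IntervalIntegrable φ volume a b := hcont.intervalIntegrable
  have h2 : ∫ t in a..b, φ t = Φ b - Φ a :=
    intervalIntegral.integral_eq_sub_of_hasDerivAt
      (fun t ht => hd t (hsub ht).1 (hsub ht).2) hii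
  have hint : IntegrableOn φ (Set.Ioc a b) volume :=
    (intervalIntegrable_iff_integrableOn_Ioc_of_le hab).1 hii
  rw [← MeasureTheory.ofReal_integral_eq_lintegral_ofReal hint
    ((ae_restrict_iff' measurableSet_Ioc).2 (Filter.Eventually.of_forall
      (fun t ht => hpos t (lt_trans ha ht.1) (lt_of_le_of_lt ht.2 hb))))]
  rw [← intervalIntegral.integral_of_le hab, h2]

lemma lint_sup {φ : ℝ → ℝ} {b : ℝ} (hb : 0 < b) (hm : Measurable φ) :
    ∫⁻ t in Set.Ioc 0 b, ENNReal.ofReal (φ t)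
      = ⨆ n : ℕ, ∫⁻ t in Set.Ioc (b / (n + 1)) b, ENNReal.ofReal (φ t) := by
  have hmono : Monotone (fun n : ℕ => Set.Ioc (b / (n + 1)) b) := by
    intro n m hnm
    apply Set.Ioc_subset_Ioc_left
    apply div_le_div_of_nonneg_left hb.le (by positivity)
    exact_mod_cast by omega
  have hunion : (⋃ n : ℕ, Set.Ioc (b / (n + 1)) b) = Set.Ioc 0 b := by
    ext x
    simp only [Set.mem_iUnion, Set.mem_Ioc]
    constructor
    · rintro ⟨n, h1, h2⟩
      exact ⟨lt_trans (by positivity) h1, h2⟩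
    · rintro ⟨hx0, hxb⟩
      obtain ⟨n, hn⟩ := exists_nat_gt (b / x)
      refine ⟨n, ?_, hxb⟩
      rw [div_lt_iff₀ (by positivity)]
      calc b = (b / x) * x := by field_simp
        _ < (n + 1) * x := by
            apply mul_lt_mul_of_pos_right _ hx0
            exact lt_trans hn (by linarith)
        _ = x * (n + 1) := by ring
  rw [← hunion,
    ← MeasureTheory.lintegral_indicator (MeasurableSet.iUnion fun _ => measurableSet_Ioc) _]
  have hptw : ∀ x, (⋃ n : ℕ, Set.Ioc (b / (n + 1)) b).indicator
      (fun t => ENNReal.ofReal (φ t)) x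
      = ⨆ n : ℕ, (Set.Ioc (b / (n + 1)) b).indicator (fun t => ENNReal.ofReal (φ t)) x :=
    fun x => Set.indicator_iUnion_apply rfl _ _ _
  rw [lintegral_congr hptw,
    MeasureTheory.lintegral_iSup
      (fun n => hm.ennreal_ofReal.indicator measurableSet_Ioc)
      (fun n m h => Set.indicator_le_indicator_of_subset (hmono h) (fun _ => zero_le))]
  simp_rw [MeasureTheory.lintegral_indicator measurableSet_Ioc]

lemma seq_tendsto {b : ℝ} (hb : 0 < b) :
    Tendsto (fun n : ℕ => b / (n + 1)) atTop (𝓝[>] (0:ℝ)) := by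
  rw [tendsto_nhdsWithin_iff]
  constructor
  · have := tendsto_one_div_add_atTop_nhds_zero_nat (𝕜 := ℝ)
    have h2 := this.const_mul b
    simpa [div_eq_mul_inv, mul_comm] using h2
  · exact Filter.Eventually.of_forall fun n => Set.mem_Ioi.2 (by positivity)

lemma seq_le {b : ℝ} (hb : 0 < b) (n : ℕ) : b / (n + 1) ≤ b := by
  rw [div_le_iff₀ (by positivity)]
  nlinarith [Nat.cast_nonneg (α := ℝ) n]

lemma lint_Ioc_zero {Φ φ : ℝ → ℝ} {b : ℝ} (hb : 0 < b) (hb1 : b < 1) (hm : Measurable φ)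
    (hd : ∀ t, 0 < t → t < 1 → HasDerivAt Φ (φ t) t)
    (hc : ∀ t, 0 < t → t < 1 → ContinuousAt φ t)
    (hpos : ∀ t, 0 < t → t < 1 → 0 ≤ φ t)
    {l : ℝ} (hlim : Tendsto Φ (𝓝[>] (0:ℝ)) (𝓝 l)) :
    ∫⁻ t in Set.Ioc 0 b, ENNReal.ofReal (φ t) = ENNReal.ofReal (Φ b - l) := by
  rw [lint_sup hb hm]
  have heq : ∀ n : ℕ, ∫⁻ t in Set.Ioc (b / (n + 1)) b, ENNReal.ofReal (φ t)
      = ENNReal.ofReal (Φ b - Φ (b / (n + 1))) :=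
    fun n => ftc_Ioc (by positivity) (seq_le hb n) hb1 hd hc hpos
  simp_rw [heq]
  have hmono : Monotone fun n : ℕ => ENNReal.ofReal (Φ b - Φ (b / (n + 1))) := by
    have : Monotone (fun n : ℕ => ∫⁻ t in Set.Ioc (b / (n + 1)) b, ENNReal.ofReal (φ t)) := by
      intro n m h
      apply lintegral_mono_set
      apply Set.Ioc_subset_Ioc_left
      apply div_le_div_of_nonneg_left hb.le (by positivity)
      exact_mod_cast by omega
    simpa [heq] using this
  have h1 : Tendsto (fun n : ℕ => ENNReal.ofReal (Φ b - Φ (b / (n + 1)))) atTop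
      (𝓝 (⨆ n : ℕ, ENNReal.ofReal (Φ b - Φ (b / (n + 1))))) := tendsto_atTop_iSup hmono
  have h2 : Tendsto (fun n : ℕ => ENNReal.ofReal (Φ b - Φ (b / (n + 1)))) atTop
      (𝓝 (ENNReal.ofReal (Φ b - l))) :=
    (ENNReal.continuous_ofReal.tendsto _).comp
      (tendsto_const_nhds.sub (hlim.comp (seq_tendsto hb)))
  exact tendsto_nhds_unique h1 h2

lemma lint_Ioc_top {Φ φ : ℝ → ℝ} {b : ℝ} (hb : 0 < b) (hb1 : b < 1) (hm : Measurable φ)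
    (hd : ∀ t, 0 < t → t < 1 → HasDerivAt Φ (φ t) t)
    (hc : ∀ t, 0 < t → t < 1 → ContinuousAt φ t)
    (hpos : ∀ t, 0 < t → t < 1 → 0 ≤ φ t)
    (hlim : Tendsto Φ (𝓝[>] (0:ℝ)) atBot) :
    ∫⁻ t in Set.Ioc 0 b, ENNReal.ofReal (φ t) = ⊤ := by
  rw [lint_sup hb hm]
  have heq : ∀ n : ℕ, ∫⁻ t in Set.Ioc (b / (n + 1)) b, ENNReal.ofReal (φ t)
      = ENNReal.ofReal (Φ b - Φ (b / (n + 1))) :=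
    fun n => ftc_Ioc (by positivity) (seq_le hb n) hb1 hd hc hpos
  simp_rw [heq]
  have hmono : Monotone fun n : ℕ => ENNReal.ofReal (Φ b - Φ (b / (n + 1))) := by
    have : Monotone (fun n : ℕ => ∫⁻ t in Set.Ioc (b / (n + 1)) b, ENNReal.ofReal (φ t)) := by
      intro n m h
      apply lintegral_mono_set
      apply Set.Ioc_subset_Ioc_left
      apply div_le_div_of_nonneg_left hb.le (by positivity)
      exact_mod_cast by omega
    simpa [heq] using this
  have h1 : Tendsto (fun n : ℕ => ENNReal.ofReal (Φ b - Φ (b / (n + 1)))) atTop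
      (𝓝 (⨆ n : ℕ, ENNReal.ofReal (Φ b - Φ (b / (n + 1))))) := tendsto_atTop_iSup hmono
  have h2 : Tendsto (fun n : ℕ => ENNReal.ofReal (Φ b - Φ (b / (n + 1)))) atTop (𝓝 ⊤) := by
    apply ENNReal.tendsto_ofReal_atTop.comp
    apply Filter.tendsto_atTop_add_const_left
    exact tendsto_neg_atBot_atTop.comp (hlim.comp (seq_tendsto hb))
  exact (tendsto_nhds_unique h1 h2)

lemma Lf_top : Tendsto Lf (𝓝[>] (0:ℝ)) atTop := by
  have h := Real.tendsto_log_nhdsGT_zero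
  have h2 : Tendsto (fun t => -Real.log t) (𝓝[>] (0:ℝ)) atTop :=
    tendsto_neg_atBot_atTop.comp h
  have := Filter.tendsto_atTop_add_const_left _ 1 h2
  exact Tendsto.congr (fun x => by simp [Lf, sub_eq_add_neg]) this

lemma LL_top : Tendsto (fun t => Real.log (Lf t)) (𝓝[>] (0:ℝ)) atTop :=
  Real.tendsto_log_atTop.comp Lf_top

lemma den_top : Tendsto (fun t => Real.sqrt (Lf t) * Real.log (Lf t)) (𝓝[>] (0:ℝ)) atTop := by
  apply tendsto_atTop_mono' _ _ LL_top
  filter_upwards [Lf_top.eventually (eventually_ge_atTop 1),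
    LL_top.eventually (eventually_ge_atTop 0)] with t h1 h0
  have hs : 1 ≤ Real.sqrt (Lf t) := by
    rw [show (1:ℝ) = Real.sqrt 1 from (Real.sqrt_one).symm]
    exact Real.sqrt_le_sqrt h1
  nlinarith

lemma Ff_lim : Tendsto Ff (𝓝[>] (0:ℝ)) (𝓝 0) := by
  have h := den_top.inv_tendsto_atTop.const_mul c0
  have : Ff = fun t => c0 * (Real.sqrt (Lf t) * Real.log (Lf t))⁻¹ := by
    funext t; simp [Ff, div_eq_mul_inv]
  rw [this]
  simpa using h

lemma Phi2_bot : Tendsto Phi2 (𝓝[>] (0:ℝ)) atBot := by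
  have h := Real.tendsto_log_atTop.comp LL_top
  have h2 := h.const_mul_atTop_of_neg (show -(c0 / 2) < 0 by have := c0_pos; linarith)
  exact h2

lemma Phi3_lim : Tendsto Phi3 (𝓝[>] (0:ℝ)) (𝓝 0) := by
  have h := LL_top.inv_tendsto_atTop.const_mul K0
  have h' : Tendsto (fun x => K0 * (Real.log (Lf x))⁻¹) (𝓝[>] (0:ℝ)) (𝓝 0) := by simpa using h
  exact h'

lemma LL0_pos : 0 < Real.log (1 + Real.log 2) := Real.log_pos (by linarith [log2_pos])

lemma K0_pos : 0 < K0 := by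
  have := c0_pos; have := LL0_pos
  unfold K0; positivity

lemma ff_pos {t : ℝ} (ht0 : 0 < t) (ht1 : t < 1) : 0 ≤ ff t := by
  have hL : 1 < Lf t := Lf_gt_one ht0 ht1
  have hLL := LL_pos ht0 ht1
  have hs : 0 < Real.sqrt (Lf t) := Real.sqrt_pos.2 (by linarith)
  have := c0_pos
  unfold ff; positivity

lemma phi2_pos {t : ℝ} (ht0 : 0 < t) (ht1 : t < 1) : 0 ≤ phi2 t := by
  have hL : 1 < Lf t := Lf_gt_one ht0 ht1
  have hLL := LL_pos ht0 ht1
  have := c0_pos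
  unfold phi2; positivity

lemma phi3_pos {t : ℝ} (ht0 : 0 < t) (ht1 : t < 1) : 0 ≤ phi3 t := by
  have hL : 1 < Lf t := Lf_gt_one ht0 ht1
  have hLL := LL_pos ht0 ht1
  have := K0_pos
  unfold phi3; positivity

lemma LL_lower {t : ℝ} (ht0 : 0 < t) (ht : t ≤ 1/2) :
    Real.log (1 + Real.log 2) ≤ Real.log (Lf t) :=
  Real.log_le_log (by linarith [log2_pos]) (Lf_mono ht0 ht)

lemma sqrt_ff_eq {t : ℝ} (ht0 : 0 < t) (ht1 : t < 1) :
    Real.sqrt (Lf t) * ff t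
      = c0 * (Real.log (Lf t) + 2) / (2 * t * Lf t * (Real.log (Lf t)) ^ 2) := by
  have hL : 1 < Lf t := Lf_gt_one ht0 ht1
  have hLL := LL_pos ht0 ht1
  have hs : 0 < Real.sqrt (Lf t) := Real.sqrt_pos.2 (by linarith)
  have hsq : Real.sqrt (Lf t) * Real.sqrt (Lf t) = Lf t := Real.mul_self_sqrt (by linarith)
  unfold ff
  rw [eq_div_iff (by positivity)]
  field_simp

lemma ineq2 {t : ℝ} (ht0 : 0 < t) (ht : t ≤ 1/2) : phi2 t ≤ Real.sqrt (Lf t) * ff t := by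
  have ht1 : t < 1 := by linarith
  rw [sqrt_ff_eq ht0 ht1]
  have hL : 1 < Lf t := Lf_gt_one ht0 ht1
  have hLL := LL_pos ht0 ht1
  have := c0_pos
  unfold phi2
  rw [div_le_div_iff₀ (by positivity) (by positivity)]
  have hLpos : (0:ℝ) < Lf t := by linarith
  nlinarith [mul_pos (mul_pos (mul_pos this ht0) hLpos) hLL]

lemma ineq3 {t : ℝ} (ht0 : 0 < t) (ht : t ≤ 1/2) : Ff t * (Lf t * ff t) ≤ phi3 t := by
  have ht1 : t < 1 := by linarith
  have hL : 1 < Lf t := Lf_gt_one ht0 ht1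
  have hLL := LL_pos ht0 ht1
  have hs : 0 < Real.sqrt (Lf t) := Real.sqrt_pos.2 (by linarith)
  have hsq : Real.sqrt (Lf t) * Real.sqrt (Lf t) = Lf t := Real.mul_self_sqrt (by linarith)
  have hlow := LL_lower ht0 ht
  have hLL0 := LL0_pos
  have hc := c0_pos
  have heq : Ff t * (Lf t * ff t)
      = c0 ^ 2 * (Real.log (Lf t) + 2) / (2 * t * Lf t * (Real.log (Lf t)) ^ 3) := by
    unfold Ff ff
    rw [eq_div_iff (by positivity)]
    field_simp
    linear_combination (-1 : ℝ) * hsq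
  rw [heq]
  unfold phi3 K0
  rw [div_le_div_iff₀ (by positivity) (by positivity)]
  have h1 : (Real.log (1 + Real.log 2))⁻¹ * Real.log (1 + Real.log 2) = 1 :=
    inv_mul_cancel₀ hLL0.ne'
  have h2 : Real.log (1 + Real.log 2) ≤ Real.log (Lf t) := hlow
  have hG := hLL
  set G := Real.log (Lf t)
  set G0 := Real.log (1 + Real.log 2)
  -- goal: c0^2 * (G+2) * (t * Lf t * G^2) ≤ c0^2*(1/2 + G0⁻¹) * (2*t*Lf t*G^3)
  have key : (G + 2) ≤ (1 / 2 + G0⁻¹) * (2 * G) := by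
    have : G0⁻¹ * G ≥ 1 := by
      rw [ge_iff_le, show (1:ℝ) = G0⁻¹ * G0 from h1.symm]
      apply mul_le_mul_of_nonneg_left h2 (by positivity)
    nlinarith
  have hLpos : (0:ℝ) < Lf t := by linarith
  nlinarith [mul_le_mul_of_nonneg_right key (show 0 ≤ c0^2 * (t * Lf t * G^2) by positivity),
    sq_nonneg G, hG, ht0, hLpos]

noncomputable def dd : ℝ → ℝ≥0∞ :=
  (Set.Ioc (0:ℝ) (1/2)).indicator (fun t => ENNReal.ofReal (ff t))

lemma meas_dd : Measurable dd :=
  (meas_ff.ennreal_ofReal).indicator measurableSet_Ioc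

lemma meas_phi2 : Measurable phi2 := by
  unfold phi2
  exact measurable_const.div
    (measurable_const.mul ((measurable_id.mul meas_Lf).mul meas_Lf.log))

lemma meas_phi3 : Measurable phi3 := by
  unfold phi3
  exact measurable_const.div ((measurable_id.mul meas_Lf).mul (meas_Lf.log.pow_const 2))

lemma Ff_half : Ff (1/2) = 1 := by
  unfold Ff
  rw [Lf_half]
  exact div_self c0_pos.ne'

lemma lint_ff : ∫⁻ t in Set.Ioc (0:ℝ) (1/2), ENNReal.ofReal (ff t) = 1 := by
  rw [lint_Ioc_zero (by norm_num) (by norm_num) meas_ff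
    (fun t h1 h2 => hasDerivAt_Ff h1 h2) (fun t h1 h2 => cont_ff h1 h2)
    (fun t h1 h2 => ff_pos h1 h2) Ff_lim]
  rw [Ff_half]
  norm_num

lemma lint_Ff {t : ℝ} (ht0 : 0 < t) (ht : t ≤ 1/2) :
    ∫⁻ s in Set.Ioc (0:ℝ) t, ENNReal.ofReal (ff s) = ENNReal.ofReal (Ff t) := by
  rw [lint_Ioc_zero ht0 (by linarith) meas_ff
    (fun t h1 h2 => hasDerivAt_Ff h1 h2) (fun t h1 h2 => cont_ff h1 h2)
    (fun t h1 h2 => ff_pos h1 h2) Ff_lim]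
  norm_num

lemma mu_Ico {t : ℝ} (ht0 : 0 < t) (ht : t ≤ 1/2) :
    (volume.withDensity dd) (Set.Ico 0 t) = ENNReal.ofReal (Ff t) := by
  rw [withDensity_apply _ measurableSet_Ico]
  unfold dd
  rw [MeasureTheory.lintegral_indicator measurableSet_Ioc,
    Measure.restrict_restrict measurableSet_Ioc]
  have hset : Set.Ioc (0:ℝ) (1/2) ∩ Set.Ico 0 t = Set.Ioo 0 t := by
    ext x
    simp only [Set.mem_inter_iff, Set.mem_Ioc, Set.mem_Ico, Set.mem_Ioo]
    constructor
    · rintro ⟨⟨h1, h2⟩, h3, h4⟩; exact ⟨h1, h4⟩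
    · rintro ⟨h1, h2⟩; exact ⟨⟨h1, by linarith⟩, by linarith, h2⟩
  rw [hset, MeasureTheory.setLIntegral_congr (Ioo_ae_eq_Ioc (a := (0:ℝ)) (b := t))]
  exact lint_Ff ht0 ht

lemma Ff_nonneg {t : ℝ} (ht0 : 0 < t) (ht1 : t < 1) : 0 ≤ Ff t := by
  have hL : 1 < Lf t := Lf_gt_one ht0 ht1
  have hLL := LL_pos ht0 ht1
  have hs : 0 < Real.sqrt (Lf t) := Real.sqrt_pos.2 (by linarith)
  have := c0_pos
  unfold Ff; positivity

lemma dd_mul_eq (g : ℝ → ℝ≥0∞) :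
    (fun t => (dd * g) t) = (Set.Ioc (0:ℝ) (1/2)).indicator
      (fun t => ENNReal.ofReal (ff t) * g t) := by
  funext t
  simp only [Pi.mul_apply, dd]
  by_cases h : t ∈ Set.Ioc (0:ℝ) (1/2)
  · rw [Set.indicator_of_mem h, Set.indicator_of_mem h]
  · rw [Set.indicator_of_notMem h, Set.indicator_of_notMem h, zero_mul]

lemma log_e_div {t : ℝ} (ht0 : 0 < t) : Real.log (Real.exp 1 / t) = Lf t := by
  rw [Real.log_div (Real.exp_ne_zero 1) ht0.ne', Real.log_exp, Lf]

/-- There is a Borel probability measure `μ` on `[0,1)`, absolutely continuous with respect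
to Lebesgue measure and supported on `[0,1/2]`, such that `∫ √(log(e/t)) dμ(t) = ⊤`, while
`∫ μ[0,t) log(e/t) dμ(t) < ∞` and `∫ (1-t)⁻¹ dμ(t) < ∞`. -/
theorem stmt18 :
    ∃ μ : Measure ℝ, IsProbabilityMeasure μ ∧ μ ≪ volume ∧
      μ (Set.Icc (0 : ℝ) (1 / 2))ᶜ = 0 ∧
      (∫⁻ t, ENNReal.ofReal (Real.sqrt (Real.log (Real.exp 1 / t))) ∂μ = ⊤) ∧
      (∫⁻ t, μ (Set.Ico 0 t) * ENNReal.ofReal (Real.log (Real.exp 1 / t)) ∂μ < ⊤) ∧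
      (∫⁻ t, ENNReal.ofReal ((1 - t)⁻¹) ∂μ < ⊤) := by
  refine ⟨volume.withDensity dd, ?_, withDensity_absolutelyContinuous _ _, ?_, ?_, ?_, ?_⟩
  · constructor
    rw [withDensity_apply _ MeasurableSet.univ, Measure.restrict_univ]
    unfold dd
    rw [MeasureTheory.lintegral_indicator measurableSet_Ioc]
    exact lint_ff
  · rw [withDensity_apply _ measurableSet_Icc.compl]
    unfold dd
    rw [MeasureTheory.lintegral_indicator measurableSet_Ioc,
      Measure.restrict_restrict measurableSet_Ioc]
    have hempty : Set.Ioc (0:ℝ) (1/2) ∩ (Set.Icc (0:ℝ) (1/2))ᶜ = ∅ := by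
      rw [Set.eq_empty_iff_forall_notMem]
      rintro x ⟨h1, h2⟩
      exact h2 ⟨h1.1.le, h1.2⟩
    rw [hempty]
    simp
  · -- divergence
    have hg : Measurable fun t : ℝ =>
        ENNReal.ofReal (Real.sqrt (Real.log (Real.exp 1 / t))) :=
      ((Real.continuous_sqrt.measurable).comp
        ((measurable_const.div measurable_id).log)).ennreal_ofReal
    rw [MeasureTheory.lintegral_withDensity_eq_lintegral_mul volume meas_dd hg,
      dd_mul_eq, MeasureTheory.lintegral_indicator measurableSet_Ioc]
    rw [← top_le_iff]
    have hle : ∫⁻ t in Set.Ioc (0:ℝ) (1/2), ENNReal.ofReal (phi2 t)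
        ≤ ∫⁻ t in Set.Ioc (0:ℝ) (1/2), ENNReal.ofReal (ff t)
            * ENNReal.ofReal (Real.sqrt (Real.log (Real.exp 1 / t))) := by
      apply MeasureTheory.setLIntegral_mono (meas_ff.ennreal_ofReal.mul hg)
      intro t ht
      rw [Pi.mul_apply, log_e_div ht.1, ← ENNReal.ofReal_mul (ff_pos ht.1 (by linarith [ht.2]))]
      apply ENNReal.ofReal_le_ofReal
      rw [mul_comm]
      exact ineq2 ht.1 ht.2
    refine le_trans ?_ hle
    rw [lint_Ioc_top (by norm_num) (by norm_num) meas_phi2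
      (fun t h1 h2 => hasDerivAt_Phi2 h1 h2) (fun t h1 h2 => cont_phi2 h1 h2)
      (fun t h1 h2 => phi2_pos h1 h2) Phi2_bot]
  · -- second integral finite
    set μ := volume.withDensity dd with hμ
    have hmono : Monotone fun t : ℝ => μ (Set.Ico 0 t) :=
      fun a b hab => measure_mono (Set.Ico_subset_Ico le_rfl hab)
    have hg : Measurable fun t : ℝ =>
        μ (Set.Ico 0 t) * ENNReal.ofReal (Real.log (Real.exp 1 / t)) :=
      (hmono.measurable).mul ((measurable_const.div measurable_id).log.ennreal_ofReal)
    rw [MeasureTheory.lintegral_withDensity_eq_lintegral_mul volume meas_dd hg,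
      dd_mul_eq, MeasureTheory.lintegral_indicator measurableSet_Ioc]
    have hle : ∫⁻ t in Set.Ioc (0:ℝ) (1/2),
        ENNReal.ofReal (ff t) * (μ (Set.Ico 0 t)
          * ENNReal.ofReal (Real.log (Real.exp 1 / t)))
        ≤ ∫⁻ t in Set.Ioc (0:ℝ) (1/2), ENNReal.ofReal (phi3 t) := by
      apply MeasureTheory.setLIntegral_mono meas_phi3.ennreal_ofReal
      intro t ht
      have ht1 : t < 1 := by linarith [ht.2]
      rw [log_e_div ht.1, hμ, mu_Ico ht.1 ht.2,
        ← ENNReal.ofReal_mul (Ff_nonneg ht.1 ht1),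
        ← ENNReal.ofReal_mul (ff_pos ht.1 ht1)]
      apply ENNReal.ofReal_le_ofReal
      rw [show ff t * (Ff t * Lf t) = Ff t * (Lf t * ff t) by ring]
      exact ineq3 ht.1 ht.2
    refine lt_of_le_of_lt hle ?_
    rw [lint_Ioc_zero (by norm_num) (by norm_num) meas_phi3
      (fun t h1 h2 => hasDerivAt_Phi3 h1 h2) (fun t h1 h2 => cont_phi3 h1 h2)
      (fun t h1 h2 => phi3_pos h1 h2) Phi3_lim]
    exact ENNReal.ofReal_lt_top
  · -- third integral finite
    have hg : Measurable fun t : ℝ => ENNReal.ofReal ((1 - t)⁻¹) :=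
      ((measurable_const.sub measurable_id).inv).ennreal_ofReal
    rw [MeasureTheory.lintegral_withDensity_eq_lintegral_mul volume meas_dd hg,
      dd_mul_eq, MeasureTheory.lintegral_indicator measurableSet_Ioc]
    have hle : ∫⁻ t in Set.Ioc (0:ℝ) (1/2),
        ENNReal.ofReal (ff t) * ENNReal.ofReal ((1 - t)⁻¹)
        ≤ ∫⁻ t in Set.Ioc (0:ℝ) (1/2), ENNReal.ofReal (ff t) * ENNReal.ofReal 2 := by
      apply MeasureTheory.setLIntegral_mono (meas_ff.ennreal_ofReal.mul measurable_const)
      intro t ht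
      apply mul_le_mul_right
      apply ENNReal.ofReal_le_ofReal
      rw [inv_le_comm₀ (by linarith [ht.2]) (by norm_num)]
      linarith [ht.2]
    refine lt_of_le_of_lt hle ?_
    rw [MeasureTheory.lintegral_mul_const _ meas_ff.ennreal_ofReal, lint_ff, one_mul]
    exact ENNReal.ofReal_lt_top
end
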